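/- Let d ≥ c ≥ 2 with d ≠ 2, and let B be the non-backtracking matrix of the complete bipartite graph K_{d,c} (a 2cd × 2cd matrix). Then the characteristic polynomial of B over ℂ equals (X² − 1)^{(c−1)(d−1)} · (X² + (c−1))^{d−1} · (X² + (d−1))^{c−1} · (X² − (c−1)(d−1)). Consequently the eigenvalues of B are ±1 with multiplicity (c−1)(d−1) each, ±i√(c−1) with multiplicity d−1 each, ±i√(d−1) with multiplicity c−1 each, and ±√(c−1)√(d−1) with multiplicity 1 each, so the spectral radius of B equals √(c−1)·√(d−1). -/

import Mathlib

open Polynomial Matrix Kronecker Finset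

/-- The non-backtracking matrix of the complete bipartite graph `K_{d,c}` (parts
`Fin d` and `Fin c`), indexed by the `2cd` directed edges: `Sum.inl (i, j)` is the
arc from left vertex `i` to right vertex `j`, and `Sum.inr (i, j)` is the arc from
right vertex `j` to left vertex `i`.  The entry at a pair of arcs is `1` iff the
second arc starts where the first one ends and does not return to its tail. -/
def nbCompleteBipartite (d c : ℕ) :
    Matrix ((Fin d × Fin c) ⊕ (Fin d × Fin c)) ((Fin d × Fin c) ⊕ (Fin d × Fin c)) ℂ :=
  fun e f =>
  match e, f with
  | Sum.inl (i, j), Sum.inr (i', j') => if j' = j ∧ i' ≠ i then 1 else 0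
  | Sum.inr (i, j), Sum.inl (i', j') => if i' = i ∧ j' ≠ j then 1 else 0
  | _, _ => 0

noncomputable section NB


/-- complete graph adjacency J - I -/
def Amat (n : ℕ) : Matrix (Fin n) (Fin n) ℂ := fun i j => if i = j then 0 else 1

def Pm (m : ℕ) : Matrix (Fin (m+1)) (Fin (m+1)) ℂ :=
  fun x k => if k = 0 then 1 else (if x = k then 1 else 0) - (if x = 0 then 1 else 0)

def Qm (m : ℕ) : Matrix (Fin (m+1)) (Fin (m+1)) ℂ :=
  fun k y => if k = 0 then ((m:ℂ)+1)⁻¹ else (if k = y then 1 else 0) - ((m:ℂ)+1)⁻¹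

def Dv (m : ℕ) : Fin (m+1) → ℂ := fun k => if k = 0 then (m:ℂ) else -1

lemma m1ne (m : ℕ) : ((m:ℂ)+1) ≠ 0 := by
  exact_mod_cast Nat.cast_add_one_ne_zero (R := ℂ) m

lemma sumP (m : ℕ) (y : Fin (m+1)) :
    ∑ k : Fin (m+1), Pm m k y = if y = 0 then (m:ℂ)+1 else 0 := by
  by_cases hy : y = 0
  · simp [Pm, hy, Finset.sum_const, Finset.card_univ]
  · simp only [Pm, if_neg hy]
    rw [Finset.sum_sub_distrib]
    simp [Finset.sum_ite_eq', hy, Ne.symm hy]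

lemma QP (m : ℕ) : Qm m * Pm m = 1 := by
  ext x y
  rw [Matrix.mul_apply]
  by_cases hx : x = 0
  · subst hx
    simp only [Qm, eq_self_iff_true, if_true]
    rw [← Finset.mul_sum, sumP]
    by_cases hy : y = 0
    · simp [hy, Matrix.one_apply, inv_mul_cancel₀ (m1ne m)]
    · simp [hy, Ne.symm hy, Matrix.one_apply]
  · simp only [Qm, if_neg hx, sub_mul]
    rw [Finset.sum_sub_distrib, ← Finset.mul_sum, sumP]
    have h1 : ∑ k, (if x = k then (1:ℂ) else 0) * Pm m k y = Pm m x y := by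
      simp [Finset.sum_ite_eq]
    rw [h1]
    by_cases hy : y = 0
    · simp [Pm, hy, Matrix.one_apply, hx, inv_mul_cancel₀ (m1ne m)]
    · simp [Pm, hy, Matrix.one_apply, hx]

lemma AP (m : ℕ) : Amat (m+1) * Pm m = Pm m * Matrix.diagonal (Dv m) := by
  ext x y
  rw [Matrix.mul_apply, Matrix.mul_diagonal]
  have hA : ∀ k, Amat (m+1) x k = 1 - (if x = k then 1 else 0) := by
    intro k; simp [Amat]; split <;> simp
  simp_rw [hA, sub_mul, one_mul]
  rw [Finset.sum_sub_distrib, sumP]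
  have h1 : ∑ k, (if x = k then (1:ℂ) else 0) * Pm m k y = Pm m x y := by
    simp [Finset.sum_ite_eq]
  rw [h1]
  by_cases hy : y = 0
  · simp [Pm, Dv, hy]
  · simp only [Pm, Dv, if_neg hy]
    ring

lemma PQ (m : ℕ) : Pm m * Qm m = 1 := mul_eq_one_comm.mp (QP m)

lemma A_eq (m : ℕ) : Amat (m+1) = Pm m * Matrix.diagonal (Dv m) * Qm m := by
  calc Amat (m+1) = Amat (m+1) * (Pm m * Qm m) := by rw [PQ]; rw [Matrix.mul_one]
    _ = (Amat (m+1) * Pm m) * Qm m := by rw [Matrix.mul_assoc]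
    _ = Pm m * Matrix.diagonal (Dv m) * Qm m := by rw [AP]

lemma nb_eq_blocks (d c : ℕ) :
    nbCompleteBipartite d c
      = Matrix.fromBlocks 0 (Amat d ⊗ₖ (1 : Matrix (Fin c) (Fin c) ℂ))
          ((1 : Matrix (Fin d) (Fin d) ℂ) ⊗ₖ Amat c) 0 := by
  ext e f
  rcases e with ⟨i, j⟩ | ⟨i, j⟩ <;> rcases f with ⟨i', j'⟩ | ⟨i', j'⟩ <;>
    simp [nbCompleteBipartite, Matrix.fromBlocks, Amat, Matrix.one_apply,
      Matrix.kroneckerMap_apply, eq_comm, and_comm, ite_and] <;>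
    split <;> simp_all <;> split <;> simp_all

section Key

variable (m n : ℕ)

abbrev ιmn := (Fin (m+1) × Fin (n+1)) ⊕ (Fin (m+1) × Fin (n+1))

lemma charpoly_nb :
    (nbCompleteBipartite (m+1) (n+1)).charpoly
      = ∏ p : Fin (m+1) × Fin (n+1), (X^2 - C (Dv m p.1 * Dv n p.2)) := by
  classical
  set B := nbCompleteBipartite (m+1) (n+1) with hBdef
  set K : Matrix (Fin (m+1) × Fin (n+1)) (Fin (m+1) × Fin (n+1)) ℂ :=
    Amat (m+1) ⊗ₖ Amat (n+1) with hK
  set Bc : Matrix (ιmn m n) (ιmn m n) ℂ[X] := B.map Polynomial.C with hBc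
  set S : Matrix (ιmn m n) (ιmn m n) ℂ[X] := Matrix.scalar _ (X : ℂ[X]) with hS
  have hcomm : ∀ M : Matrix (ιmn m n) (ιmn m n) ℂ[X], S * M = M * S := by
    intro M
    exact (Matrix.scalar_commute (X : ℂ[X]) (fun r => Commute.all _ _) M)
  -- B squared
  have hBB : B * B = Matrix.fromBlocks K 0 0 K := by
    rw [hBdef, nb_eq_blocks, Matrix.fromBlocks_multiply]
    simp only [Matrix.zero_mul, Matrix.mul_zero, add_zero, zero_add]
    rw [← Matrix.mul_kronecker_mul, ← Matrix.mul_kronecker_mul]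
    simp [hK]
  -- charmatrix identity
  have hchm : B.charmatrix = S - Bc := rfl
  have key1 : B.charmatrix * (S + Bc) = Matrix.scalar _ ((X : ℂ[X])^2) - (B * B).map Polynomial.C := by
    rw [hchm, Matrix.sub_mul, Matrix.mul_add, Matrix.mul_add, hcomm Bc]
    have hSS : S * S = Matrix.scalar _ ((X : ℂ[X])^2) := by
      rw [hS, ← _root_.map_mul, ← sq]
    have hBcBc : Bc * Bc = (B * B).map Polynomial.C := by
      rw [hBc, ← Matrix.map_mul]
    rw [hSS, hBcBc]
    abel
  -- det (S + Bc) = charpoly B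
  have key2 : (S + Bc).det = B.charpoly := by
    set E : Matrix (ιmn m n) (ιmn m n) ℂ[X] :=
      Matrix.fromBlocks 1 0 0 (-1) with hE
    have hEE : E * E = 1 := by
      rw [hE, Matrix.fromBlocks_multiply]
      simp [Matrix.fromBlocks_one]
    have hEBcE : E * Bc * E = - Bc := by
      rw [hBc, hBdef, nb_eq_blocks]
      rw [Matrix.fromBlocks_map, hE, Matrix.fromBlocks_multiply, Matrix.fromBlocks_multiply]
      simp [Matrix.fromBlocks_neg]
    have hESE : E * S * E = S := by
      have hc : S * E = E * S :=
        Matrix.scalar_commute (X : ℂ[X]) (fun r => Commute.all _ _) E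
      rw [← hc, Matrix.mul_assoc, hEE, Matrix.mul_one]
    have hconj : E * (S + Bc) * E = S - Bc := by
      rw [Matrix.mul_add, Matrix.add_mul, hESE, hEBcE, sub_eq_add_neg]
    have hdetE : E.det * E.det = 1 := by
      rw [← Matrix.det_mul, hEE, Matrix.det_one]
    have hdet : (S - Bc).det = (S + Bc).det := by
      rw [← hconj, Matrix.det_mul, Matrix.det_mul]
      calc E.det * (S + Bc).det * E.det = E.det * E.det * (S + Bc).det := by ring
        _ = (S + Bc).det := by rw [hdetE, one_mul]
    calc (S + Bc).det = (S - Bc).det := hdet.symm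
      _ = B.charmatrix.det := by rw [hchm]
      _ = B.charpoly := rfl
  -- the diagonal factorization of K
  set f : Fin (m+1) × Fin (n+1) → ℂ := fun p => Dv m p.1 * Dv n p.2 with hf
  have hKfact : K = (Pm m ⊗ₖ Pm n) * Matrix.diagonal f * (Qm m ⊗ₖ Qm n) := by
    rw [hK, A_eq m, A_eq n, Matrix.mul_kronecker_mul, Matrix.mul_kronecker_mul,
      Matrix.diagonal_kronecker_diagonal]
  have hPQ2 : (Pm m ⊗ₖ Pm n) * (Qm m ⊗ₖ Qm n) = 1 := by
    rw [← Matrix.mul_kronecker_mul, PQ, PQ, Matrix.one_kronecker_one]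
  -- det T
  set S2 : Matrix (Fin (m+1) × Fin (n+1)) (Fin (m+1) × Fin (n+1)) ℂ[X] :=
    Matrix.scalar _ ((X : ℂ[X])^2) with hS2
  set T : Matrix (Fin (m+1) × Fin (n+1)) (Fin (m+1) × Fin (n+1)) ℂ[X] :=
    S2 - K.map Polynomial.C with hT
  have hdetT : T.det = ∏ p : Fin (m+1) × Fin (n+1), (X^2 - C (f p)) := by
    set P2 := (Pm m ⊗ₖ Pm n).map Polynomial.C with hP2
    set Q2 := (Qm m ⊗ₖ Qm n).map Polynomial.C with hQ2
    have hPQ2' : P2 * Q2 = 1 := by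
      rw [hP2, hQ2, ← Matrix.map_mul, hPQ2, Matrix.map_one _ (map_zero _) (map_one _)]
    have hS2c : ∀ M, S2 * M = M * S2 := fun M =>
      Matrix.scalar_commute ((X : ℂ[X])^2) (fun r => Commute.all _ _) M
    have e1 : P2 * S2 * Q2 = S2 := by
      rw [← hS2c P2, Matrix.mul_assoc, hPQ2', Matrix.mul_one]
    have e2 : K.map Polynomial.C = P2 * (Matrix.diagonal f).map Polynomial.C * Q2 := by
      rw [hP2, hQ2, hKfact, Matrix.map_mul, Matrix.map_mul]
    have hTfact : T = P2 * (S2 - (Matrix.diagonal f).map Polynomial.C) * Q2 := by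
      rw [hT, e2, Matrix.mul_sub, Matrix.sub_mul, e1]
    have hmid : S2 - (Matrix.diagonal f).map Polynomial.C
        = Matrix.diagonal (fun p => (X : ℂ[X])^2 - C (f p)) := by
      ext p q
      by_cases h : p = q
      · subst h; simp [hS2, Matrix.scalar_apply]
      · simp [hS2, Matrix.scalar_apply, Matrix.diagonal_apply_ne _ h]
    rw [hTfact, Matrix.det_mul, Matrix.det_mul, hmid, Matrix.det_diagonal]
    calc P2.det * (∏ p, ((X:ℂ[X])^2 - C (f p))) * Q2.det
        = (∏ p, ((X:ℂ[X])^2 - C (f p))) * (P2.det * Q2.det) := by ring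
      _ = ∏ p, ((X:ℂ[X])^2 - C (f p)) := by
          rw [← Matrix.det_mul, hPQ2', Matrix.det_one, mul_one]
  -- the block decomposition of scalar (X^2) - (B*B).map C
  have hblocks : Matrix.scalar (ιmn m n) ((X : ℂ[X])^2) - (B * B).map Polynomial.C
      = Matrix.fromBlocks T 0 0 T := by
    rw [hBB]
    ext i j
    rcases i with i | i <;> rcases j with j | j <;>
      by_cases h : i = j <;>
        simp [h, hT, hS2, Matrix.scalar_apply, Matrix.diagonal_apply, Matrix.fromBlocks,
          Matrix.map_apply, Matrix.sub_apply]
  -- put everything together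
  have hsq : B.charpoly * B.charpoly
      = (∏ p : Fin (m+1) × Fin (n+1), ((X:ℂ[X])^2 - C (f p)))
        * ∏ p : Fin (m+1) × Fin (n+1), ((X:ℂ[X])^2 - C (f p)) := by
    calc B.charpoly * B.charpoly
        = B.charmatrix.det * (S + Bc).det := by rw [key2]; rfl
      _ = (B.charmatrix * (S + Bc)).det := (Matrix.det_mul _ _).symm
      _ = (Matrix.fromBlocks T 0 0 T).det := by rw [key1, hblocks]
      _ = T.det * T.det := Matrix.det_fromBlocks_zero₂₁ _ _ _
      _ = _ := by rw [hdetT]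
  -- monicity argument
  have hqmonic : (∏ p : Fin (m+1) × Fin (n+1), ((X:ℂ[X])^2 - C (f p))).Monic :=
    monic_prod_of_monic _ _ fun p _ => monic_X_pow_sub_C _ two_ne_zero
  have hpmonic : B.charpoly.Monic := Matrix.charpoly_monic B
  rcases mul_self_eq_mul_self_iff.mp hsq with h | h
  · exact h
  · exfalso
    have h1 := hpmonic.leadingCoeff
    rw [h, leadingCoeff_neg, hqmonic.leadingCoeff] at h1
    norm_num at h1

end Key

lemma mem_spectrum_iff_eval {ι : Type*} [Fintype ι] [DecidableEq ι]
    (M : Matrix ι ι ℂ) (μ : ℂ) :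
    μ ∈ spectrum ℂ M ↔ M.charpoly.eval μ = 0 := by
  rw [spectrum.mem_iff]
  have hmap : (M.charmatrix).map (Polynomial.evalRingHom μ)
      = algebraMap ℂ (Matrix ι ι ℂ) μ - M := by
    ext i j
    by_cases h : i = j <;>
      simp [h, Matrix.charmatrix_apply, Matrix.algebraMap_eq_diagonal,
        Matrix.diagonal_apply, Matrix.sub_apply, Matrix.map_apply]
  have hdet : M.charpoly.eval μ = (algebraMap ℂ (Matrix ι ι ℂ) μ - M).det := by
    calc M.charpoly.eval μ
        = (Polynomial.evalRingHom μ) M.charmatrix.det := rfl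
      _ = ((M.charmatrix).map (Polynomial.evalRingHom μ)).det :=
          RingHom.map_det _ _
      _ = _ := by rw [hmap]
  rw [hdet]
  constructor
  · intro h
    by_contra hne
    exact h ((Matrix.isUnit_iff_isUnit_det _).mpr (isUnit_iff_ne_zero.mpr hne))
  · intro h hu
    exact (isUnit_iff_ne_zero.mp ((Matrix.isUnit_iff_isUnit_det _).mp hu)) h

lemma prod_eval (m n : ℕ) :
    ∏ p : Fin (m+1) × Fin (n+1), ((X:ℂ[X])^2 - C (Dv m p.1 * Dv n p.2))
      = (X^2 - 1)^(n*m) * (X^2 + C (n:ℂ))^m * (X^2 + C (m:ℂ))^n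
        * (X^2 - C ((n:ℂ)*(m:ℂ))) := by
  have inner : ∀ a : ℂ, ∏ j : Fin (n+1), ((X:ℂ[X])^2 - C (a * Dv n j))
      = (X^2 - C (a*(n:ℂ))) * (X^2 + C a)^n := by
    intro a
    rw [Fin.prod_univ_succ]
    have h1 : ∀ j : Fin n, ((X:ℂ[X])^2 - C (a * Dv n j.succ)) = X^2 + C a := by
      intro j
      simp [Dv, Fin.succ_ne_zero, mul_neg, mul_one, map_neg, sub_neg_eq_add]
    rw [Finset.prod_congr rfl fun j _ => h1 j, Finset.prod_const, Finset.card_univ,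
      Fintype.card_fin]
    simp [Dv]
  rw [Fintype.prod_prod_type, Fin.prod_univ_succ]
  have houter : ∀ i : Fin m,
      ∏ j : Fin (n+1), ((X:ℂ[X])^2 - C (Dv m i.succ * Dv n j))
        = (X^2 + C (n:ℂ)) * (X^2 - 1)^n := by
    intro i
    rw [inner]
    have hd : Dv m i.succ = -1 := by simp [Dv, Fin.succ_ne_zero]
    rw [hd, show (-1 : ℂ) * (n:ℂ) = -(n:ℂ) by ring, map_neg, map_neg, C_1, sub_neg_eq_add]
    ring
  rw [Finset.prod_congr rfl fun i _ => houter i, Finset.prod_const, Finset.card_univ,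
    Fintype.card_fin, inner (Dv m 0)]
  have hd0 : Dv m 0 = (m:ℂ) := by simp [Dv]
  rw [hd0]
  simp only [Polynomial.C_mul, mul_pow, pow_mul]
  ring

/-- For `d ≥ c ≥ 2`, `d ≠ 2`, the characteristic polynomial of the non-backtracking
matrix `B` of `K_{d,c}` is
`(X²-1)^((c-1)(d-1)) · (X²+(c-1))^(d-1) · (X²+(d-1))^(c-1) · (X²-(c-1)(d-1))`,
and the spectral radius of `B` equals `√(c-1)·√(d-1)`. -/
theorem stmt_2 (d c : ℕ) (hc : 2 ≤ c) (hcd : c ≤ d) (hd2 : d ≠ 2) :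
    (nbCompleteBipartite d c).charpoly
        = (Polynomial.X ^ 2 - 1) ^ ((c - 1) * (d - 1))
            * (Polynomial.X ^ 2 + Polynomial.C ((c : ℂ) - 1)) ^ (d - 1)
            * (Polynomial.X ^ 2 + Polynomial.C ((d : ℂ) - 1)) ^ (c - 1)
            * (Polynomial.X ^ 2 - Polynomial.C (((c : ℂ) - 1) * ((d : ℂ) - 1)))
    ∧ (∀ μ ∈ spectrum ℂ (nbCompleteBipartite d c),
        ‖μ‖ ≤ Real.sqrt ((c : ℝ) - 1) * Real.sqrt ((d : ℝ) - 1))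
    ∧ ∃ μ ∈ spectrum ℂ (nbCompleteBipartite d c),
        ‖μ‖ = Real.sqrt ((c : ℝ) - 1) * Real.sqrt ((d : ℝ) - 1) := by
  obtain ⟨n, rfl⟩ : ∃ n, c = n + 1 := ⟨c - 1, by omega⟩
  obtain ⟨m, rfl⟩ : ∃ m, d = m + 1 := ⟨d - 1, by omega⟩
  have hn : n ≠ 0 := by omega
  have hm : m ≠ 0 := by omega
  have hcast1 : ((n+1 : ℕ) : ℂ) - 1 = (n : ℂ) := by push_cast; ring
  have hcast2 : ((m+1 : ℕ) : ℂ) - 1 = (m : ℂ) := by push_cast; ring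
  have hrcast1 : ((n+1 : ℕ) : ℝ) - 1 = (n : ℝ) := by push_cast; ring
  have hrcast2 : ((m+1 : ℕ) : ℝ) - 1 = (m : ℝ) := by push_cast; ring
  have h1n : (1:ℝ) ≤ (n:ℝ) := by exact_mod_cast Nat.one_le_iff_ne_zero.mpr hn
  have h1m : (1:ℝ) ≤ (m:ℝ) := by exact_mod_cast Nat.one_le_iff_ne_zero.mpr hm
  have hchar : (nbCompleteBipartite (m+1) (n+1)).charpoly
      = (X^2 - 1)^(n*m) * (X^2 + C (n:ℂ))^m * (X^2 + C (m:ℂ))^n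
        * (X^2 - C ((n:ℂ)*(m:ℂ))) :=
    (charpoly_nb m n).trans (prod_eval m n)
  have hspec : ∀ μ : ℂ, μ ∈ spectrum ℂ (nbCompleteBipartite (m+1) (n+1)) ↔
      (μ^2 = 1 ∨ μ^2 = -(n:ℂ) ∨ μ^2 = -(m:ℂ) ∨ μ^2 = (n:ℂ)*(m:ℂ)) := by
    intro μ
    rw [mem_spectrum_iff_eval, hchar]
    simp only [Polynomial.eval_mul, Polynomial.eval_pow, Polynomial.eval_sub,
      Polynomial.eval_add, Polynomial.eval_one, Polynomial.eval_C, Polynomial.eval_X]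
    rw [mul_eq_zero, mul_eq_zero, mul_eq_zero,
      pow_eq_zero_iff (Nat.mul_ne_zero hn hm), pow_eq_zero_iff hm, pow_eq_zero_iff hn,
      sub_eq_zero, sub_eq_zero, add_eq_zero_iff_eq_neg, add_eq_zero_iff_eq_neg]
    simp only [or_assoc]
  refine ⟨?_, ?_, ?_⟩
  · rw [hchar]
    simp only [Nat.add_sub_cancel, hcast1, hcast2]
  · intro μ hμ
    have h2 : ‖μ‖^2 ≤ (n:ℝ)*(m:ℝ) := by
      have habs : ‖μ‖^2 = ‖μ^2‖ := (norm_pow _ _).symm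
      rcases (hspec μ).mp hμ with h | h | h | h
      · rw [habs, h]; simp; nlinarith
      · rw [habs, h, norm_neg, Complex.norm_natCast]; nlinarith
      · rw [habs, h, norm_neg, Complex.norm_natCast]; nlinarith
      · rw [habs, h, norm_mul, Complex.norm_natCast, Complex.norm_natCast]
    rw [hrcast1, hrcast2, ← Real.sqrt_mul (by positivity)]
    rw [Real.le_sqrt (norm_nonneg μ) (by positivity)]
    exact h2
  · refine ⟨(Real.sqrt ((n:ℝ)*(m:ℝ)) : ℂ), ?_, ?_⟩
    · rw [hspec]
      right; right; right
      rw [← Complex.ofReal_pow, Real.sq_sqrt (by positivity)]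
      push_cast; ring
    · rw [Complex.norm_real, Real.norm_of_nonneg (Real.sqrt_nonneg _),
        Real.sqrt_mul (by positivity), hrcast1, hrcast2]
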